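/- Let ε ∈ (0,1), t ∈ ℝ, and x ∈ ℝⁿ with x ≠ 0 and ‖x‖ ≠ √(1−ε)·t. Define t* = (‖x‖² − (1−ε)·t²) / (2·√(1−ε)·(‖x‖ − √(1−ε)·t)), the point r = (t*, √(1−ε)·t*·x/‖x‖) ∈ ℝ^{1+n}, and q = (t, x) ∈ ℝ^{1+n}. Then both segments from the origin to r and from r to q are η_ε-null, i.e., η_ε(r, r) = 0 and η_ε(q − r, q − r) = 0. -/

import Mathlib

/-- The `ε`-slim Minkowski form on `ℝ^{1+n}`, represented as `ℝ × EuclideanSpace ℝ (Fin n)`: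
`η_ε(v,w) = -(1-ε)·v₀·w₀ + ⟨v', w'⟩`. -/
noncomputable def slimMinkowski {n : ℕ} (ε : ℝ) (v w : ℝ × EuclideanSpace ℝ (Fin n)) : ℝ :=
  -((1 - ε) * (v.1 * w.1)) + (inner ℝ v.2 w.2 : ℝ)

/-- For `ε ∈ (0,1)`, `t ∈ ℝ`, `x ∈ ℝⁿ` with `x ≠ 0` and `‖x‖ ≠ √(1-ε)·t`, setting
`t* = (‖x‖² − (1−ε)t²)/(2√(1−ε)(‖x‖ − √(1−ε) t))`, `r = (t*, √(1−ε)·t*·x/‖x‖)` and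
`q = (t, x)`, both segments from the origin to `r` and from `r` to `q` are `η_ε`-null:
`η_ε(r,r) = 0` and `η_ε(q−r, q−r) = 0`. -/
theorem slim_null_segments {n : ℕ} (hn : 1 ≤ n) {ε : ℝ} (hε : ε ∈ Set.Ioo (0:ℝ) 1)
    (t : ℝ) (x : EuclideanSpace ℝ (Fin n)) (hx : x ≠ 0)
    (hxt : ‖x‖ ≠ Real.sqrt (1 - ε) * t)
    (tstar : ℝ)
    (htstar : tstar = (‖x‖ ^ 2 - (1 - ε) * t ^ 2) /
      (2 * Real.sqrt (1 - ε) * (‖x‖ - Real.sqrt (1 - ε) * t)))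
    (r q : ℝ × EuclideanSpace ℝ (Fin n))
    (hr : r = (tstar, (Real.sqrt (1 - ε) * tstar / ‖x‖) • x))
    (hq : q = (t, x)) :
    slimMinkowski ε r r = 0 ∧ slimMinkowski ε (q - r) (q - r) = 0 := by
  obtain ⟨hε0, hε1⟩ := hε
  set s := Real.sqrt (1 - ε) with hs
  have h1ε : (0:ℝ) < 1 - ε := by linarith
  have hs2 : s ^ 2 = 1 - ε := Real.sq_sqrt h1ε.le
  have hs0 : s ≠ 0 := by
    rw [hs]; exact ne_of_gt (Real.sqrt_pos.mpr h1ε)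
  have hxn : ‖x‖ ≠ 0 := norm_ne_zero_iff.mpr hx
  have hden : ‖x‖ - s * t ≠ 0 := sub_ne_zero.mpr hxt
  have hst : s * tstar = (‖x‖ + s * t) / 2 := by
    rw [htstar, ← hs2]
    field_simp
    ring
  have key : ∀ c : ℝ, (inner ℝ (c • x) (c • x) : ℝ) = c ^ 2 * ‖x‖ ^ 2 := by
    intro c
    rw [real_inner_smul_left, real_inner_smul_right, real_inner_self_eq_norm_sq]
    ring
  constructor
  · rw [hr]
    simp only [slimMinkowski, key]
    rw [← hs2]
    field_simp
    ring
  · rw [hq, hr]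
    have hsub : x - (s * tstar / ‖x‖) • x = (1 - s * tstar / ‖x‖) • x := by
      rw [sub_smul, one_smul]
    simp only [slimMinkowski, Prod.fst_sub, Prod.snd_sub, hsub, key]
    rw [← hs2]
    field_simp
    linear_combination (-2 * (‖x‖ - s * t)) * hst
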